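/- Let T₁, T₂ be trees and T = T₁ * v * T₂ their vertex bonding at a vertex v. Then v ∈ core(T) if and only if v ∈ core(T₁) and v ∈ core(T₂). -/
import Mathlib


open Finset SimpleGraph
open scoped Classical

variable {V : Type*}

/-- A stable (independent) set of vertices. -/
def stableSet (G : SimpleGraph V) (S : Finset V) : Prop :=
  ∀ u ∈ S, ∀ w ∈ S, ¬ G.Adj u w

/-- A maximum stable set. -/
def maxStableSet [Fintype V] (G : SimpleGraph V) (S : Finset V) : Prop :=
  stableSet G S ∧ ∀ S' : Finset V, stableSet G S' → S'.card ≤ S.card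

/-- The independence number α(G). -/
noncomputable def alphaNum [Fintype V] (G : SimpleGraph V) : ℕ :=
  ((Finset.univ : Finset V).powerset.filter (fun S => stableSet G S)).sup Finset.card

/-- core(G): the intersection of all maximum stable sets of G. -/
noncomputable def coreSet [Fintype V] (G : SimpleGraph V) : Finset V :=
  Finset.univ.filter (fun v => ∀ S : Finset V, maxStableSet G S → v ∈ S)

/-- A pendant vertex: a vertex with exactly one neighbor. -/
def pendant (G : SimpleGraph V) (v : V) : Prop :=
  ∃! w, G.Adj v w

/-- {A, B} is a bipartition of G into color classes. -/
def isBipartition [Fintype V] (G : SimpleGraph V) (A B : Finset V) : Prop :=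
  Disjoint A B ∧ A ∪ B = Finset.univ ∧
    ∀ u v, G.Adj u v → (u ∈ A ∧ v ∈ B) ∨ (u ∈ B ∧ v ∈ A)

/-- Stable sets of the subtree induced on a vertex set `A`. -/
def stableIn (G : SimpleGraph V) (A S : Finset V) : Prop :=
  S ⊆ A ∧ stableSet G S

/-- Maximum stable sets of the subtree induced on `A`. -/
def maxStableIn [Fintype V] (G : SimpleGraph V) (A S : Finset V) : Prop :=
  stableIn G A S ∧ ∀ S' : Finset V, stableIn G A S' → S'.card ≤ S.card

/-- The independence number of the subtree induced on `A`. -/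
noncomputable def alphaIn [Fintype V] (G : SimpleGraph V) (A : Finset V) : ℕ :=
  (A.powerset.filter (fun S => stableSet G S)).sup Finset.card

/-- The core of the subtree induced on `A`. -/
noncomputable def coreIn [Fintype V] (G : SimpleGraph V) (A : Finset V) : Finset V :=
  A.filter (fun x => ∀ S : Finset V, maxStableIn G A S → x ∈ S)

/-- `T` is the vertex bonding `T₁ * v * T₂` of the trees `T₁` and `T₂`, induced
on the vertex sets `A` and `B` respectively, identified at the vertex `v`. -/
def isBonding [Fintype V] (T : SimpleGraph V) (v : V) (A B : Finset V) : Prop :=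
  T.IsTree ∧ (T.induce (A : Set V)).IsTree ∧ (T.induce (B : Set V)).IsTree ∧
  A ∩ B = {v} ∧ A ∪ B = Finset.univ ∧
  ∀ x y : V, T.Adj x y → (x ∈ A ∧ y ∈ A) ∨ (x ∈ B ∧ y ∈ B)

lemma stableSet_subset {G : SimpleGraph V} {S S' : Finset V} (h : S' ⊆ S)
    (hS : stableSet G S) : stableSet G S' :=
  fun u hu w hw => hS u (h hu) w (h hw)

lemma exists_maxStableIn [Fintype V] (G : SimpleGraph V) (A : Finset V) :
    ∃ S, maxStableIn G A S := by
  obtain ⟨S, hS, hmax⟩ := Finset.exists_max_image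
    ((A.powerset).filter (fun S => stableIn G A S)) Finset.card
    ⟨∅, Finset.mem_filter.2 ⟨Finset.mem_powerset.2 (Finset.empty_subset _),
      Finset.empty_subset _, fun u hu => absurd hu (Finset.notMem_empty u)⟩⟩
  exact ⟨S, (Finset.mem_filter.1 hS).2, fun S' hS' =>
    hmax S' (Finset.mem_filter.2 ⟨Finset.mem_powerset.2 hS'.1, hS'⟩)⟩

lemma exists_maxStableSet [Fintype V] (G : SimpleGraph V) :
    ∃ S, maxStableSet G S := by
  obtain ⟨S, hS⟩ := exists_maxStableIn G Finset.univ
  exact ⟨S, hS.1.2, fun S' h' => hS.2 S' ⟨Finset.subset_univ _, h'⟩⟩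

lemma union_stable {T : SimpleGraph V} {v : V} {A B : Finset V}
    (hAB : A ∩ B = {v})
    (hedge : ∀ x y, T.Adj x y → (x ∈ A ∧ y ∈ A) ∨ (x ∈ B ∧ y ∈ B))
    {SA SB : Finset V} (hSA : SA ⊆ A) (hSB : SB ⊆ B)
    (hsA : stableSet T SA) (hsB : stableSet T SB)
    (hv : v ∈ SA ↔ v ∈ SB) : stableSet T (SA ∪ SB) := by
  have key : ∀ u ∈ SA, ∀ w ∈ SB, ¬ T.Adj u w := by
    intro u hu w hw hadj
    rcases hedge u w hadj with ⟨huA, hwA⟩ | ⟨huB, hwB⟩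
    · have : w = v := by
        have : w ∈ A ∩ B := Finset.mem_inter.2 ⟨hwA, hSB hw⟩
        rwa [hAB, Finset.mem_singleton] at this
      subst this
      exact hsA u hu w (hv.2 hw) hadj
    · have : u = v := by
        have : u ∈ A ∩ B := Finset.mem_inter.2 ⟨hSA hu, huB⟩
        rwa [hAB, Finset.mem_singleton] at this
      subst this
      exact hsB u (hv.1 hu) w hw hadj
  intro u hu w hw hadj
  rcases Finset.mem_union.1 hu with hu | hu <;> rcases Finset.mem_union.1 hw with hw | hw
  · exact hsA u hu w hw hadj
  · exact key u hu w hw hadj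
  · exact key w hw u hu hadj.symm
  · exact hsB u hu w hw hadj

/-- Forward direction, for one side. -/
lemma forward_aux [Fintype V] {T : SimpleGraph V} {v : V} {A B : Finset V}
    (hAB : A ∩ B = {v})
    (hUB : A ∪ B = Finset.univ)
    (hedge : ∀ x y, T.Adj x y → (x ∈ A ∧ y ∈ A) ∨ (x ∈ B ∧ y ∈ B))
    (hcore : ∀ S, maxStableSet T S → v ∈ S) :
    ∀ SA, maxStableIn T A SA → v ∈ SA := by
  intro SA hSA
  by_contra hv
  obtain ⟨M, hM⟩ := exists_maxStableSet T
  have hvM : v ∈ M := hcore M hM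
  set MB := (M ∩ B).erase v with hMBdef
  have hMBsub : MB ⊆ B := (Finset.erase_subset _ _).trans Finset.inter_subset_right
  have hMBstab : stableSet T MB :=
    stableSet_subset ((Finset.erase_subset _ _).trans Finset.inter_subset_left) hM.1
  have hvMB : v ∉ MB := Finset.notMem_erase _ _
  set N := SA ∪ MB with hNdef
  have hNstab : stableSet T N :=
    union_stable hAB hedge hSA.1.1 hMBsub hSA.1.2 hMBstab (iff_of_false hv hvMB)
  -- cardinality facts
  have hMsplit : (M ∩ A) ∪ (M ∩ B) = M := by
    rw [← Finset.inter_union_distrib_left, hUB, Finset.inter_univ]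
  have hMinter : (M ∩ A) ∩ (M ∩ B) = {v} := by
    have h1 : (M ∩ A) ∩ (M ∩ B) = M ∩ (A ∩ B) := by
      ext x; simp only [Finset.mem_inter]; tauto
    rw [h1, hAB]
    ext x
    simp only [Finset.mem_inter, Finset.mem_singleton]
    constructor
    · tauto
    · rintro rfl; exact ⟨hvM, rfl⟩
  have hMcard : M.card + 1 = (M ∩ A).card + (M ∩ B).card := by
    have := Finset.card_union_add_card_inter (M ∩ A) (M ∩ B)
    rwa [hMsplit, hMinter, Finset.card_singleton] at this
  have hMBcard : MB.card + 1 = (M ∩ B).card :=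
    Finset.card_erase_add_one (Finset.mem_inter.2 ⟨hvM, by
      have : v ∈ A ∩ B := by rw [hAB]; exact Finset.mem_singleton_self v
      exact (Finset.mem_inter.1 this).2⟩)
  have hMA_le : (M ∩ A).card ≤ SA.card :=
    hSA.2 (M ∩ A) ⟨Finset.inter_subset_right, stableSet_subset Finset.inter_subset_left hM.1⟩
  have hdisj : Disjoint SA MB := by
    rw [Finset.disjoint_left]
    intro x hx hx'
    have : x ∈ A ∩ B := Finset.mem_inter.2 ⟨hSA.1.1 hx, hMBsub hx'⟩
    rw [hAB, Finset.mem_singleton] at this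
    exact hvMB (this ▸ hx')
  have hNcard : N.card = SA.card + MB.card := Finset.card_union_of_disjoint hdisj
  have hMN : M.card ≤ N.card := by omega
  have hNmax : maxStableSet T N := ⟨hNstab, fun S' h' => (hM.2 S' h').trans hMN⟩
  have := hcore N hNmax
  rcases Finset.mem_union.1 this with h | h
  · exact hv h
  · exact hvMB h

/-- Backward direction. -/
lemma backward_aux [Fintype V] {T : SimpleGraph V} {v : V} {A B : Finset V}
    (hAB : A ∩ B = {v})
    (hUB : A ∪ B = Finset.univ)
    (hedge : ∀ x y, T.Adj x y → (x ∈ A ∧ y ∈ A) ∨ (x ∈ B ∧ y ∈ B))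
    (hA : ∀ S, maxStableIn T A S → v ∈ S)
    (hB : ∀ S, maxStableIn T B S → v ∈ S) :
    ∀ S, maxStableSet T S → v ∈ S := by
  intro S hS
  by_contra hvS
  obtain ⟨MA, hMA⟩ := exists_maxStableIn T A
  obtain ⟨MB, hMB⟩ := exists_maxStableIn T B
  have hvMA : v ∈ MA := hA MA hMA
  have hvMB : v ∈ MB := hB MB hMB
  -- split S
  have hSsplit : (S ∩ A) ∪ (S ∩ B) = S := by
    rw [← Finset.inter_union_distrib_left, hUB, Finset.inter_univ]
  have hSinter : (S ∩ A) ∩ (S ∩ B) = ∅ := by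
    rw [Finset.eq_empty_iff_forall_notMem]
    intro x hx
    simp only [Finset.mem_inter] at hx
    have : x ∈ A ∩ B := Finset.mem_inter.2 ⟨hx.1.2, hx.2.2⟩
    rw [hAB, Finset.mem_singleton] at this
    exact hvS (this ▸ hx.1.1)
  have hScard : S.card = (S ∩ A).card + (S ∩ B).card := by
    have := Finset.card_union_add_card_inter (S ∩ A) (S ∩ B)
    rw [hSsplit, hSinter, Finset.card_empty] at this
    omega
  -- strict bounds
  have hSA_lt : (S ∩ A).card < MA.card := by
    have hle : (S ∩ A).card ≤ MA.card :=
      hMA.2 (S ∩ A) ⟨Finset.inter_subset_right, stableSet_subset Finset.inter_subset_left hS.1⟩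
    rcases lt_or_eq_of_le hle with h | h
    · exact h
    · exfalso
      have : maxStableIn T A (S ∩ A) :=
        ⟨⟨Finset.inter_subset_right, stableSet_subset Finset.inter_subset_left hS.1⟩,
          fun S' h' => (hMA.2 S' h').trans_eq h.symm⟩
      have := hA _ this
      exact hvS (Finset.mem_inter.1 this).1
  have hSB_lt : (S ∩ B).card < MB.card := by
    have hle : (S ∩ B).card ≤ MB.card :=
      hMB.2 (S ∩ B) ⟨Finset.inter_subset_right, stableSet_subset Finset.inter_subset_left hS.1⟩
    rcases lt_or_eq_of_le hle with h | h
    · exact h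
    · exfalso
      have : maxStableIn T B (S ∩ B) :=
        ⟨⟨Finset.inter_subset_right, stableSet_subset Finset.inter_subset_left hS.1⟩,
          fun S' h' => (hMB.2 S' h').trans_eq h.symm⟩
      have := hB _ this
      exact hvS (Finset.mem_inter.1 this).1
  -- big stable set
  set M := MA ∪ MB with hMdef
  have hMstab : stableSet T M :=
    union_stable hAB hedge hMA.1.1 hMB.1.1 hMA.1.2 hMB.1.2 (iff_of_true hvMA hvMB)
  have hinter_le : (MA ∩ MB).card ≤ 1 := by
    have : MA ∩ MB ⊆ {v} := by
      rw [← hAB]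
      exact Finset.inter_subset_inter hMA.1.1 hMB.1.1
    simpa using Finset.card_le_card this
  have hMcard : M.card + (MA ∩ MB).card = MA.card + MB.card :=
    Finset.card_union_add_card_inter MA MB
  have : M.card ≤ S.card := hS.2 M hMstab
  omega

theorem stmt15 [Fintype V] (T : SimpleGraph V) (v : V) (A B : Finset V)
    (hbond : isBonding T v A B) :
    v ∈ coreSet T ↔ v ∈ coreIn T A ∧ v ∈ coreIn T B := by
  obtain ⟨-, -, -, hAB, hUB, hedge⟩ := hbond
  have hvAB : v ∈ A ∩ B := by rw [hAB]; exact Finset.mem_singleton_self v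
  have hvA : v ∈ A := (Finset.mem_inter.1 hvAB).1
  have hvB : v ∈ B := (Finset.mem_inter.1 hvAB).2
  have hAB' : B ∩ A = {v} := by rwa [Finset.inter_comm]
  have hUB' : B ∪ A = Finset.univ := by rwa [Finset.union_comm]
  have hedge' : ∀ x y, T.Adj x y → (x ∈ B ∧ y ∈ B) ∨ (x ∈ A ∧ y ∈ A) :=
    fun x y h => (hedge x y h).symm
  simp only [coreSet, coreIn, Finset.mem_filter, Finset.mem_univ, true_and]
  constructor
  · intro hcore
    exact ⟨⟨hvA, forward_aux hAB hUB hedge hcore⟩,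
           ⟨hvB, forward_aux hAB' hUB' hedge' hcore⟩⟩
  · rintro ⟨⟨-, hA⟩, ⟨-, hB⟩⟩
    exact backward_aux hAB hUB hedge hA hB
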